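/- arXiv:2506.11495 — 9 statements merged into one kernel-verified Lean document; each statement's English description precedes it below -/
import Mathlib

section
/- The maximum degree of a vertex in the unit-zero divisor graph G_UZ(R) equals |U(R)|, the number of units of R. In particular, the vertex 0 attains this degree. -/
open SimpleGraph

/-- The unit-zero divisor graph of a commutative ring: distinct `u`, `v` are adjacent
iff `u + v` is a unit and `u * v` is a zero divisor. -/
def GUZ (R : Type*) [CommRing R] : SimpleGraph R where
  Adj u v := u ≠ v ∧ IsUnit (u + v) ∧ ∃ y : R, y ≠ 0 ∧ u * v * y = 0
  symm := by
    constructor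
    intro u v h
    refine ⟨h.1.symm, ?_, ?_⟩
    · rw [add_comm]; exact h.2.1
    · rw [mul_comm]; exact h.2.2
  loopless := by constructor; intro u h; exact h.1 rfl

noncomputable def unitsEquivIsUnit' (R : Type*) [CommRing R] : Rˣ ≃ {x : R // IsUnit x} where
  toFun u := ⟨u, u.isUnit⟩
  invFun x := x.2.unit
  left_inv u := Units.ext rfl
  right_inv x := Subtype.ext x.2.unit_spec

/-- The maximum degree of a vertex in `G_UZ(R)` equals `|U(R)|`, attained at `0`. -/
theorem stmt1 (R : Type*) [CommRing R] [Fintype R] [DecidableEq R] [Nontrivial R] :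
    ((GUZ R).neighborSet 0).ncard = Fintype.card Rˣ ∧
      ∀ x : R, ((GUZ R).neighborSet x).ncard ≤ Fintype.card Rˣ := by
  have hcard : {u : R | IsUnit u}.ncard = Fintype.card Rˣ := by
    rw [Set.ncard_eq_toFinset_card', Set.toFinset_setOf]
    rw [← Fintype.card_subtype]
    exact (Fintype.card_congr (unitsEquivIsUnit' R)).symm
  constructor
  · have : (GUZ R).neighborSet 0 = {u : R | IsUnit u} := by
      ext v
      simp only [mem_neighborSet, GUZ, Set.mem_setOf_eq]
      constructor
      · rintro ⟨-, hu, -⟩; simpa using hu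
      · intro hu
        exact ⟨fun h => hu.ne_zero h.symm, by simpa using hu,
          ⟨1, one_ne_zero, by ring⟩⟩
    rw [this, hcard]
  · intro x
    have hsub : (x + ·) '' ((GUZ R).neighborSet x) ⊆ {u : R | IsUnit u} := by
      rintro _ ⟨v, hv, rfl⟩
      exact hv.2.1
    calc ((GUZ R).neighborSet x).ncard
        = ((x + ·) '' ((GUZ R).neighborSet x)).ncard :=
          (Set.ncard_image_of_injective _ (add_right_injective x)).symm
      _ ≤ {u : R | IsUnit u}.ncard :=
          Set.ncard_le_ncard hsub (Set.toFinite _)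
      _ = Fintype.card Rˣ := hcard
end

section
/- If R is a finite local commutative ring with maximal ideal m, then G_UZ(R) is a complete bipartite graph with parts Z(R) = m and U(R): two distinct elements are adjacent if and only if exactly one of them is a unit. -/
open SimpleGraph

/-- In a finite commutative ring, a nonunit is a zero divisor. -/
lemma nonunit_zero_divisor {R : Type*} [CommRing R] [Fintype R] {v : R}
    (hv : ¬ IsUnit v) : ∃ y : R, y ≠ 0 ∧ v * y = 0 := by
  by_contra h
  push_neg at h
  have hinj : Function.Injective (fun y : R => v * y) := by
    intro a b hab
    simp only at hab
    have hz : v * (a - b) = 0 := by rw [mul_sub, hab, sub_self]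
    by_contra hne
    exact (h (a - b) (sub_ne_zero.mpr hne)) hz
  obtain ⟨w, hw⟩ := (Finite.surjective_of_injective hinj) 1
  exact hv (isUnit_iff_exists_inv.mpr ⟨w, hw⟩)

/-- In a local ring, a unit plus a nonunit is a unit. -/
lemma unit_add_nonunit {R : Type*} [CommRing R] [IsLocalRing R] {u v : R}
    (hu : IsUnit u) (hv : ¬ IsUnit v) : IsUnit (u + v) := by
  by_contra hsum
  have h1 : u + v ∈ IsLocalRing.maximalIdeal R := hsum
  have h2 : v ∈ IsLocalRing.maximalIdeal R := hv
  have : u ∈ IsLocalRing.maximalIdeal R := by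
    have := Ideal.sub_mem _ h1 h2
    simpa using this
  exact this hu

/-- If `R` is a finite local commutative ring, then `G_UZ(R)` is complete bipartite with
parts the nonunits (the maximal ideal) and the units: two distinct elements are adjacent
iff exactly one of them is a unit. -/
theorem stmt4 (R : Type*) [CommRing R] [Fintype R] [IsLocalRing R] :
    ∀ u v : R, u ≠ v →
      ((GUZ R).Adj u v ↔ (IsUnit u ∧ ¬ IsUnit v) ∨ (¬ IsUnit u ∧ IsUnit v)) := by
  intro u v hne
  constructor
  · rintro ⟨-, hsum, y, hy, hzero⟩
    by_cases hu : IsUnit u <;> by_cases hv : IsUnit v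
    · exfalso
      apply hy
      obtain ⟨w, hw⟩ := (hu.mul hv).exists_left_inv
      calc y = w * (u * v) * y := by rw [hw, one_mul]
        _ = w * (u * v * y) := by ring
        _ = 0 := by rw [hzero, mul_zero]
    · exact Or.inl ⟨hu, hv⟩
    · exact Or.inr ⟨hu, hv⟩
    · exact absurd (IsLocalRing.isUnit_or_isUnit_of_isUnit_add hsum) (by tauto)
  · rintro (⟨hu, hv⟩ | ⟨hu, hv⟩)
    · obtain ⟨y, hy, hvy⟩ := nonunit_zero_divisor hv
      exact ⟨hne, unit_add_nonunit hu hv, y, hy, by rw [mul_assoc, hvy, mul_zero]⟩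
    · obtain ⟨y, hy, huy⟩ := nonunit_zero_divisor hu
      exact ⟨hne, add_comm u v ▸ unit_add_nonunit hv hu, y, hy,
        by rw [mul_comm u v, mul_assoc, huy, mul_zero]⟩
end

section
/- For a finite commutative ring R with identity, the unit-zero divisor graph G_UZ(R) is a star graph if and only if R is a field. -/
open SimpleGraph

/-- For a finite commutative ring `R`, `G_UZ(R)` is a star graph (some center adjacent to
all other vertices, and every edge contains the center) if and only if `R` is a field. -/
theorem stmt6 (R : Type*) [CommRing R] [Fintype R] [Nontrivial R] :
    (∃ c : R, (∀ v : R, v ≠ c → (GUZ R).Adj c v) ∧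
      ∀ u v : R, (GUZ R).Adj u v → u = c ∨ v = c) ↔ IsField R := by
  constructor
  · rintro ⟨c, hc, hedge⟩
    by_cases hc0 : c = 0
    · subst hc0
      refine ⟨exists_pair_ne R, mul_comm, ?_⟩
      intro a ha
      obtain ⟨-, hu, -⟩ := hc a ha
      rw [zero_add] at hu
      obtain ⟨u, hu⟩ := hu
      exact ⟨↑u⁻¹, by rw [← hu, Units.mul_inv]⟩
    · -- c is a unit (adjacency with 0)
      have hcu : IsUnit c := by
        obtain ⟨-, hu, -⟩ := hc 0 (Ne.symm hc0)
        rwa [add_zero] at hu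
      -- c = 1
      have hc1 : c = 1 := by
        by_contra h1
        obtain ⟨-, -, y, hy, h⟩ := hc 1 (fun h => h1 h.symm)
        rw [mul_one] at h
        obtain ⟨u, hu⟩ := hcu
        apply hy
        calc y = ↑u⁻¹ * (c * y) := by rw [← mul_assoc, ← hu, Units.inv_mul, one_mul]
        _ = 0 := by rw [h, mul_zero]
      subst hc1
      -- char 2
      have h2 : (1 : R) + 1 = 0 := by
        by_cases hm : (-1 : R) = 1
        · nth_rewrite 2 [← hm]; ring
        · obtain ⟨-, -, y, hy, h⟩ := hc (-1) hm
          rw [one_mul, neg_mul, neg_eq_zero, one_mul] at h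
          exact absurd h hy
      refine ⟨exists_pair_ne R, mul_comm, ?_⟩
      intro a ha
      by_cases ha1 : a = 1
      · exact ⟨1, by rw [ha1, mul_one]⟩
      · exfalso
        obtain ⟨-, -, y, hy, h⟩ := hc a ha1
        rw [one_mul] at h
        have hadj : (GUZ R).Adj a (1 + a) := by
          refine ⟨?_, ?_, y, hy, ?_⟩
          · intro he
            apply one_ne_zero (α := R)
            have h10 : (1 : R) + a = 0 + a := by rw [zero_add, ← he]
            exact add_right_cancel h10
          · have : a + (1 + a) = 1 + (1 + 1) * a := by ring
            rw [this, h2, zero_mul, add_zero]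
            exact isUnit_one
          · calc a * (1 + a) * y = (1 + a) * (a * y) := by ring
            _ = 0 := by rw [h, mul_zero]
        rcases hedge a (1 + a) hadj with h' | h'
        · exact ha1 h'
        · apply ha
          have : (1 : R) + a = 1 + 0 := by rw [h', add_zero]
          exact add_left_cancel this
  · intro hF
    letI := hF.toField
    refine ⟨0, ?_, ?_⟩
    · intro v hv
      refine ⟨Ne.symm hv, ?_, 1, one_ne_zero, by ring⟩
      rw [zero_add]
      exact (isUnit_iff_ne_zero).mpr hv
    · rintro u v ⟨-, -, y, hy, h⟩
      by_contra hcon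
      push_neg at hcon
      have := mul_ne_zero (mul_ne_zero hcon.1 hcon.2) hy
      exact this h
end

section
/- If R has exactly n maximal ideals, then G_UZ(R) is (n+1)-partite: its vertex set can be partitioned into n+1 independent sets, namely U(R) together with n sets obtained from the maximal ideals by successive set differences. -/
open SimpleGraph

/-- If `R` has exactly `n` maximal ideals `I 0, …, I (n-1)`, then `G_UZ(R)` is
`(n+1)`-partite: the sets `U(R)`, `I 0`, and `I k \ (I 0 ∪ ⋯ ∪ I (k-1))` for
`1 ≤ k ≤ n-1` are pairwise disjoint independent sets covering `R`. -/
theorem stmt12 (R : Type*) [CommRing R] [Fintype R] (n : ℕ)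
    (I : Fin n → Ideal R) (hmax : ∀ k, (I k).IsMaximal)
    (hinj : Function.Injective I)
    (hall : ∀ J : Ideal R, J.IsMaximal → ∃ k, J = I k) :
    -- the parts, with `P k = I k \ (I 0 ∪ ⋯ ∪ I (k-1))`
    ∀ P : Fin n → Set R,
      (∀ k, P k = (I k : Set R) \ ⋃ j : Fin n, ⋃ _ : j < k, (I j : Set R)) →
      -- each part is an independent set
      ((∀ a b : R, IsUnit a → IsUnit b → ¬ (GUZ R).Adj a b) ∧
        (∀ k, ∀ a ∈ P k, ∀ b ∈ P k, ¬ (GUZ R).Adj a b) ∧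
        -- the parts are pairwise disjoint and cover `R`
        (∀ k, Disjoint {x : R | IsUnit x} (P k)) ∧
        (∀ j k, j ≠ k → Disjoint (P j) (P k)) ∧
        {x : R | IsUnit x} ∪ ⋃ k, P k = Set.univ) := by

  intro P hP
  classical
  refine ⟨?_, ?_, ?_, ?_, ?_⟩
  · rintro a b ha hb ⟨-, -, y, hy, h0⟩
    exact hy (((ha.mul hb).mul_right_eq_zero).mp h0)
  · rintro k a ha b hb ⟨-, hu, -⟩
    rw [hP k] at ha hb
    exact (hmax k).ne_top (Ideal.eq_top_of_isUnit_mem _ ((I k).add_mem ha.1 hb.1) hu)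
  · intro k
    rw [Set.disjoint_left]
    intro x hx hxP
    rw [hP k] at hxP
    exact (hmax k).ne_top (Ideal.eq_top_of_isUnit_mem _ hxP.1 hx)
  · have key : ∀ j k : Fin n, j < k → Disjoint (P j) (P k) := by
      intro j k hjk
      rw [Set.disjoint_left]
      intro x hxj hxk
      rw [hP j] at hxj
      rw [hP k] at hxk
      exact hxk.2 (Set.mem_iUnion.mpr ⟨j, Set.mem_iUnion.mpr ⟨hjk, hxj.1⟩⟩)
    intro j k hjk
    rcases lt_or_gt_of_ne hjk with h | h
    · exact key j k h
    · exact (key k j h).symm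
  · rw [Set.eq_univ_iff_forall]
    intro x
    by_cases hx : IsUnit x
    · exact Or.inl hx
    · refine Or.inr ?_
      have hex : ∃ m : ℕ, ∃ h : m < n, x ∈ I ⟨m, h⟩ := by
        obtain ⟨J, hJ, hxJ⟩ := exists_max_ideal_of_mem_nonunits (mem_nonunits_iff.mpr hx)
        obtain ⟨k, hk⟩ := hall J hJ
        exact ⟨k.1, k.2, by rw [Fin.eta]; exact hk ▸ hxJ⟩
      obtain ⟨hm, hxm⟩ := Nat.find_spec hex
      refine Set.mem_iUnion.mpr ⟨⟨Nat.find hex, hm⟩, ?_⟩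
      rw [hP]
      refine ⟨hxm, ?_⟩
      intro hmem
      simp only [Set.mem_iUnion] at hmem
      obtain ⟨j, hj, hxj⟩ := hmem
      exact Nat.find_min hex hj ⟨j.2, by rw [Fin.eta]; exact hxj⟩
end

section
/- Let J(R) be the Jacobson radical of R. If the cosets x + J(R) and y + J(R) are adjacent in G_UZ(R/J(R)), then for every a in x + J(R) and every b in y + J(R), a and b are adjacent in G_UZ(R). -/
open SimpleGraph

lemma isUnit_of_mk_jacobson {R : Type*} [CommRing R] (u : R)
    (h : IsUnit (Ideal.Quotient.mk (Ideal.jacobson (⊥ : Ideal R)) u)) : IsUnit u := by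
  obtain ⟨w, hw⟩ := h.exists_right_inv
  obtain ⟨v, rfl⟩ := Ideal.Quotient.mk_surjective w
  have : u * v - 1 ∈ Ideal.jacobson (⊥ : Ideal R) := by
    rw [← Ideal.Quotient.eq_zero_iff_mem, map_sub, map_one, map_mul, hw, sub_self]
  exact isUnit_of_mul_isUnit_left (Ideal.isUnit_of_sub_one_mem_jacobson_bot _ this)

/-- If the cosets `x + J(R)` and `y + J(R)` are adjacent in `G_UZ(R/J(R))`, then every
element of `x + J(R)` is adjacent to every element of `y + J(R)` in `G_UZ(R)`. -/
theorem stmt14 (R : Type*) [CommRing R] [Fintype R] (x y : R)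
    (h : (GUZ (R ⧸ Ideal.jacobson (⊥ : Ideal R))).Adj
      (Ideal.Quotient.mk (Ideal.jacobson (⊥ : Ideal R)) x)
      (Ideal.Quotient.mk (Ideal.jacobson (⊥ : Ideal R)) y)) :
    ∀ a b : R, a - x ∈ Ideal.jacobson (⊥ : Ideal R) →
      b - y ∈ Ideal.jacobson (⊥ : Ideal R) → (GUZ R).Adj a b := by
  intro a b ha hb
  set J := Ideal.jacobson (⊥ : Ideal R)
  have hma : Ideal.Quotient.mk J a = Ideal.Quotient.mk J x :=
    Ideal.Quotient.eq.mpr ha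
  have hmb : Ideal.Quotient.mk J b = Ideal.Quotient.mk J y :=
    Ideal.Quotient.eq.mpr hb
  obtain ⟨hne, hu, hz⟩ := h
  refine ⟨?_, ?_, ?_⟩
  · rintro rfl; exact hne (hma ▸ hmb ▸ rfl)
  · exact isUnit_of_mk_jacobson _ (by rw [map_add, hma, hmb]; exact hu)
  -- a * b is not a unit, hence a zero divisor in the finite ring R
  · have hnu : ¬ IsUnit (a * b) := by
      intro hab
      have : IsUnit (Ideal.Quotient.mk J x * Ideal.Quotient.mk J y) := by
        rw [← hma, ← hmb, ← map_mul]; exact hab.map _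
      obtain ⟨z, hz0, hzz⟩ := hz
      obtain ⟨w, hw⟩ := this.exists_left_inv
      exact hz0 (by
        have h2 := congrArg (fun t => w * t) hzz
        simp only [mul_zero] at h2; rwa [← mul_assoc, hw, one_mul] at h2)
    by_cases hinj : Function.Injective (fun z : R => a * b * z)
    · exact absurd (IsUnit.of_mul_eq_one _
        ((Finite.injective_iff_surjective.mp hinj 1).choose_spec)) hnu
    · simp only [Function.Injective, not_forall] at hinj
      obtain ⟨z₁, z₂, he, hne'⟩ := hinj
      exact ⟨z₁ - z₂, sub_ne_zero.mpr hne', by rw [mul_sub, he, sub_self]⟩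
end

section
/- G_UZ(Z_n) is a star graph if and only if n is prime. -/
open SimpleGraph

/-- `G_UZ(ℤ_n)` is a star graph if and only if `n` is prime. -/
theorem stmt16 (n : ℕ) (hn : 2 ≤ n) :
    (∃ c : ZMod n, (∀ v : ZMod n, v ≠ c → (GUZ (ZMod n)).Adj c v) ∧
      ∀ u v : ZMod n, (GUZ (ZMod n)).Adj u v → u = c ∨ v = c) ↔ n.Prime := by
  have hne : NeZero n := ⟨by omega⟩
  have hnt : Nontrivial (ZMod n) := by
    haveI : Fact (1 < n) := ⟨by omega⟩
    infer_instance
  constructor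
  · rintro ⟨c, hadj, _⟩
    -- First: 2c = 0
    have h2c : c + c = 0 := by
      by_contra h
      have hne' : -c ≠ c := by
        intro h'
        exact h (by linear_combination -h')
      have h'' := (hadj (-c) hne').2.1
      simp at h'' 
    by_cases hc : c = 0
    swap
    · -- c ≠ 0 : then c is a unit and 2 = 0, so n = 2
      have h0 : (0 : ZMod n) ≠ c := fun h => hc h.symm
      have hu : IsUnit c := by
        have := (hadj 0 h0).2.1
        simpa using this
      obtain ⟨u, hu⟩ := hu
      have h2 : (2 : ZMod n) = 0 := by
        have : (2 : ZMod n) * c = 0 := by ring_nf; linear_combination h2c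
        calc (2 : ZMod n) = 2 * c * ↑u⁻¹ := by
              rw [← hu, mul_assoc, Units.mul_inv, mul_one]
          _ = 0 := by rw [this, zero_mul]
      have : n ∣ 2 := by
        have := (ZMod.natCast_eq_zero_iff 2 n).mp (by exact_mod_cast h2)
        exact this
      have h2' := Nat.le_of_dvd two_pos this
      have : n = 2 := by omega
      subst this
      exact Nat.prime_two
    subst hc
    -- every nonzero element is a unit → prime
    by_contra hp
    obtain ⟨m, hmdvd, hm2, hmlt⟩ := Nat.exists_dvd_of_not_prime2 hn hp
    have hm0 : (m : ZMod n) ≠ 0 := by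
      rw [Ne, ZMod.natCast_eq_zero_iff]
      intro h
      have := Nat.le_of_dvd (by omega) h
      omega
    have := (hadj (m : ZMod n) hm0).2.1
    rw [zero_add] at this
    rw [ZMod.isUnit_iff_coprime] at this
    have hg : Nat.gcd m n = 1 := this
    rw [Nat.gcd_eq_left hmdvd] at hg
    omega
  · intro hp
    haveI := Fact.mk hp
    refine ⟨0, ?_, ?_⟩
    · intro v hv
      refine ⟨fun h => hv h.symm, by simpa using Ne.isUnit hv, 1, one_ne_zero, by simp⟩
    · rintro u v ⟨-, -, y, hy, h⟩
      rcases mul_eq_zero.mp h with h' | h'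
      · rcases mul_eq_zero.mp h' with h'' | h''
        · exact Or.inl h''
        · exact Or.inr h''
      · exact absurd h' hy
end

section
/- If n = p^k for a prime p and positive integer k, then G_UZ(Z_n) is the complete bipartite graph K_{a,b} with a = p^{k−1} (the size of the ideal generated by p) and b = p^{k−1}(p−1) = φ(n) (the number of units). -/
open SimpleGraph

section aux
variable (p k : ℕ)

lemma auxA (hp : p.Prime) (hk : 1 ≤ k) : ((p : ZMod (p ^ k)))^(k-1) ≠ 0 := by
  haveI : NeZero (p ^ k) := ⟨pow_ne_zero _ hp.pos.ne'⟩
  rw [show ((p : ZMod (p ^ k)))^(k-1) = ((p^(k-1) : ℕ) : ZMod (p ^ k)) by push_cast; ring,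
    Ne, ZMod.natCast_eq_zero_iff]
  intro hdvd
  have := Nat.le_of_dvd (pow_pos hp.pos _) hdvd
  exact absurd this (by
    have := Nat.pow_lt_pow_right hp.one_lt (show k - 1 < k by omega)
    omega)

lemma auxB (hp : p.Prime) (hk : 1 ≤ k) (x : ZMod (p ^ k)) :
    x ∈ Ideal.span {(p : ZMod (p ^ k))} ↔ ¬ IsUnit x := by
  haveI : NeZero (p ^ k) := ⟨pow_ne_zero _ hp.pos.ne'⟩
  haveI : Fact (1 < p ^ k) := ⟨Nat.one_lt_pow (by omega) hp.one_lt⟩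
  rw [Ideal.mem_span_singleton]
  constructor
  · rintro ⟨c, rfl⟩ hu
    have hpu : IsUnit ((p : ZMod (p ^ k))) := isUnit_of_mul_isUnit_left hu
    have : IsUnit (((p : ZMod (p ^ k)))^k) := hpu.pow k
    rw [show ((p : ZMod (p ^ k)))^k = ((p^k : ℕ) : ZMod (p ^ k)) by push_cast; ring,
      ZMod.natCast_self] at this
    exact one_ne_zero ((isUnit_zero_iff.mp this).symm)
  · intro hu
    have hx : x = ((x.val : ℕ) : ZMod (p ^ k)) := (ZMod.natCast_rightInverse x).symm
    have hnc : ¬ Nat.Coprime x.val (p ^ k) := by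
      intro hc
      exact hu (hx ▸ (ZMod.isUnit_iff_coprime x.val (p ^ k)).mpr hc)
    have hpd : p ∣ x.val := by
      by_contra hnd
      exact hnc (Nat.Coprime.pow_right k (Nat.coprime_comm.mp (hp.coprime_iff_not_dvd.mpr hnd)))
    obtain ⟨m, hm⟩ := hpd
    exact ⟨(m : ZMod (p ^ k)), by rw [hx, hm]; push_cast; ring⟩

end aux

/-- If `n = p ^ k` for a prime `p` and `k ≥ 1`, then `G_UZ(ℤ_n)` is the complete
bipartite graph with parts the ideal generated by `p`, of size `p ^ (k - 1)`, and the
units, of number `p ^ (k - 1) * (p - 1) = φ(n)`. -/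
theorem stmt17 (p k : ℕ) (hp : p.Prime) (hk : 1 ≤ k) :
    ((Ideal.span {(p : ZMod (p ^ k))} : Ideal (ZMod (p ^ k))) : Set (ZMod (p ^ k))).ncard
        = p ^ (k - 1) ∧
    {x : ZMod (p ^ k) | IsUnit x}.ncard = p ^ (k - 1) * (p - 1) ∧
    {x : ZMod (p ^ k) | IsUnit x}.ncard = Nat.totient (p ^ k) ∧
    ∀ u v : ZMod (p ^ k), u ≠ v →
      ((GUZ (ZMod (p ^ k))).Adj u v ↔
        ((u ∈ Ideal.span {(p : ZMod (p ^ k))} ∧ v ∉ Ideal.span {(p : ZMod (p ^ k))}) ∨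
          (u ∉ Ideal.span {(p : ZMod (p ^ k))} ∧ v ∈ Ideal.span {(p : ZMod (p ^ k))}))) := by
  haveI : NeZero (p ^ k) := ⟨pow_ne_zero _ hp.pos.ne'⟩
  -- units count
  have hcardU : {x : ZMod (p ^ k) | IsUnit x}.ncard = Nat.totient (p ^ k) := by
    rw [Set.ncard_eq_toFinset_card']
    rw [← ZMod.card_units_eq_totient (p ^ k)]
    rw [← Fintype.card_coe]
    apply Fintype.card_congr
    apply Equiv.symm
    exact
      { toFun := fun u => ⟨(u : ZMod (p ^ k)), by simp [Set.mem_toFinset]⟩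
        invFun := fun x => (Set.mem_toFinset.mp x.2).unit
        left_inv := by intro u; ext; simp
        right_inv := by intro x; ext; simp [IsUnit.unit_spec] }
  have htot : Nat.totient (p ^ k) = p ^ (k - 1) * (p - 1) := Nat.totient_prime_pow hp hk
  have hpow : p ^ k = p ^ (k - 1) * p := by
    rw [← pow_succ]; congr 1; omega
  -- ideal = nonunits
  have hset : ((Ideal.span {(p : ZMod (p ^ k))} : Ideal (ZMod (p ^ k))) : Set (ZMod (p ^ k)))
      = {x : ZMod (p ^ k) | IsUnit x}ᶜ := by
    ext x
    simp [auxB p k hp hk x]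
  have hcardI : ((Ideal.span {(p : ZMod (p ^ k))} : Ideal (ZMod (p ^ k))) :
      Set (ZMod (p ^ k))).ncard = p ^ (k - 1) := by
    have hadd := Set.ncard_add_ncard_compl {x : ZMod (p ^ k) | IsUnit x}
    rw [hcardU, htot] at hadd
    rw [hset]
    have hcard : Nat.card (ZMod (p ^ k)) = p ^ k := by
      rw [Nat.card_eq_fintype_card, ZMod.card]
    rw [hcard] at hadd
    have hmul : p ^ (k - 1) * p = p ^ (k - 1) * (p - 1) + p ^ (k - 1) := by
      rw [← Nat.mul_succ]; congr 1; have := hp.pos; omega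
    exact Nat.add_left_cancel (hadd.trans (hpow.trans hmul))
  refine ⟨hcardI, by rw [hcardU, htot], hcardU, ?_⟩
  intro u v huv
  constructor
  · rintro ⟨-, hsum, y, hy, hzero⟩
    by_cases hu : u ∈ Ideal.span {(p : ZMod (p ^ k))} <;>
      by_cases hv : v ∈ Ideal.span {(p : ZMod (p ^ k))}
    · exfalso
      have : u + v ∈ Ideal.span {(p : ZMod (p ^ k))} := Ideal.add_mem _ hu hv
      exact (auxB p k hp hk _).mp this hsum
    · exact Or.inl ⟨hu, hv⟩
    · exact Or.inr ⟨hu, hv⟩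
    · exfalso
      have hu' := not_not.mp (fun h => hu ((auxB p k hp hk u).mpr h))
      have hv' := not_not.mp (fun h => hv ((auxB p k hp hk v).mpr h))
      have : IsUnit (u * v) := hu'.mul hv'
      exact hy (this.mul_left_cancel (by rw [mul_zero]; exact hzero))
  · -- backward
    have key : ∀ a b : ZMod (p ^ k), a ≠ b →
        a ∈ Ideal.span {(p : ZMod (p ^ k))} → b ∉ Ideal.span {(p : ZMod (p ^ k))} →
        (GUZ (ZMod (p ^ k))).Adj a b := by
      intro a b hab ha hb
      refine ⟨hab, ?_, ((p : ZMod (p ^ k)))^(k-1), auxA p k hp hk, ?_⟩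
      · by_contra hns
        have : a + b ∈ Ideal.span {(p : ZMod (p ^ k))} := (auxB p k hp hk _).mpr hns
        have : b ∈ Ideal.span {(p : ZMod (p ^ k))} := by
          have := Ideal.sub_mem _ this ha
          simpa using this
        exact hb this
      · obtain ⟨c, hc⟩ := Ideal.mem_span_singleton.mp ha
        rw [hc]
        have hpk : ((p : ZMod (p ^ k)))^k = 0 := by
          rw [show ((p : ZMod (p ^ k)))^k = ((p^k : ℕ) : ZMod (p ^ k)) by push_cast; ring,
            ZMod.natCast_self]
        calc (p : ZMod (p^k)) * c * b * (p : ZMod (p^k))^(k-1)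
            = ((p : ZMod (p^k)) * (p : ZMod (p^k))^(k-1)) * (c * b) := by ring
          _ = 0 := by
              rw [← pow_succ', show k - 1 + 1 = k by omega, hpk, zero_mul]
    rintro (⟨hu, hv⟩ | ⟨hu, hv⟩)
    · exact key u v huv hu hv
    · exact ((key v u huv.symm hv hu).symm)
end

section
/- G_UZ(Z_n) contains a triangle (cycle of length 3) if and only if n is odd, composite, and not a prime power. -/
open SimpleGraph

lemma isUnit_prod_aux {α β : Type*} [Monoid α] [Monoid β] {u : α} {v : β}
    (hu : IsUnit u) (hv : IsUnit v) : IsUnit (u, v) := by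
  obtain ⟨a, rfl⟩ := hu
  obtain ⟨b, rfl⟩ := hv
  exact ⟨⟨(↑a, ↑b), (↑a⁻¹, ↑b⁻¹), by ext <;> simp, by ext <;> simp⟩, rfl⟩

lemma GUZ_map_aux {R S : Type*} [CommRing R] [CommRing S] (e : R ≃+* S) {x y : S}
    (h : (GUZ S).Adj x y) : (GUZ R).Adj (e.symm x) (e.symm y) := by
  obtain ⟨hne, hu, z, hz0, hz⟩ := h
  refine ⟨fun h => hne (e.symm.injective h), ?_, e.symm z, ?_, ?_⟩
  · rw [← map_add]; exact hu.map e.symm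
  · intro h; exact hz0 (by simpa using congrArg e h)
  · rw [← map_mul, ← map_mul, hz, map_zero]

/-- A triangle in the unit–zero-divisor graph of a product of two `ZMod`s with odd
moduli `> 1`. -/
lemma triangle_prod_aux (m1 m2 : ℕ) (h1 : 1 < m1) (h2 : 1 < m2)
    (ho1 : Odd m1) (ho2 : Odd m2) :
    ∃ A B C : ZMod m1 × ZMod m2, (GUZ _).Adj A B ∧ (GUZ _).Adj B C ∧ (GUZ _).Adj A C := by
  haveI : Fact (1 < m1) := ⟨h1⟩
  haveI : Fact (1 < m2) := ⟨h2⟩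
  have u2_1 : IsUnit (2 : ZMod m1) := by
    have := (ZMod.isUnit_iff_coprime 2 m1).2 (Nat.coprime_two_left.2 ho1)
    simpa using this
  have u2_2 : IsUnit (2 : ZMod m2) := by
    have := (ZMod.isUnit_iff_coprime 2 m2).2 (Nat.coprime_two_left.2 ho2)
    simpa using this
  refine ⟨((0 : ZMod m1), (1 : ZMod m2)), ((1 : ZMod m1), (0 : ZMod m2)),
    ((1 : ZMod m1), (1 : ZMod m2)), ?_, ?_, ?_⟩
  · refine ⟨by simp [Prod.ext_iff], ?_, (1, 1), by simp [Prod.ext_iff], by simp [Prod.ext_iff]⟩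
    have : ((0 : ZMod m1), (1 : ZMod m2)) + (1, 0) = (1, 1) := by simp
    rw [this]
    exact isUnit_prod_aux isUnit_one isUnit_one
  · refine ⟨by simp [Prod.ext_iff], ?_, ((0 : ZMod m1), (1 : ZMod m2)),
      by simp [Prod.ext_iff], by simp [Prod.ext_iff]⟩
    have : ((1 : ZMod m1), (0 : ZMod m2)) + (1, 1) = (2, 1) := by
      simp [Prod.ext_iff]; ring
    rw [this]
    exact isUnit_prod_aux u2_1 isUnit_one
  · refine ⟨by simp [Prod.ext_iff], ?_, ((1 : ZMod m1), (0 : ZMod m2)),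
      by simp [Prod.ext_iff], by simp [Prod.ext_iff]⟩
    have : ((0 : ZMod m1), (1 : ZMod m2)) + (1, 1) = (1, 2) := by
      simp [Prod.ext_iff]; ring
    rw [this]
    exact isUnit_prod_aux isUnit_one u2_2

/-- `G_UZ(ℤ_n)` contains a triangle if and only if `n` is odd, composite, and not a
prime power. -/
theorem stmt18 (n : ℕ) (hn : 2 ≤ n) :
    (∃ a b c : ZMod n, (GUZ (ZMod n)).Adj a b ∧ (GUZ (ZMod n)).Adj b c ∧
        (GUZ (ZMod n)).Adj a c) ↔
      (Odd n ∧ ¬ n.Prime ∧ ¬ IsPrimePow n) := by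
  have hn0 : n ≠ 0 := by omega
  constructor
  · rintro ⟨a, b, c, hab, hbc, hac⟩
    -- not a prime power
    have hnpp : ¬ IsPrimePow n := by
      rintro hpp
      obtain ⟨p, k, hp, hk, rfl⟩ := (isPrimePow_nat_iff n).1 hpp
      haveI : NeZero (p ^ k) := ⟨by positivity⟩
      have key : ∀ x : ZMod (p ^ k), ¬ IsUnit x ↔ p ∣ x.val := by
        intro x
        have hx : ((x.val : ℕ) : ZMod (p ^ k)) = x := ZMod.natCast_rightInverse x
        nth_rewrite 1 [← hx]
        rw [ZMod.isUnit_iff_coprime, Nat.coprime_pow_right_iff hk,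
          Nat.coprime_comm, hp.coprime_iff_not_dvd, not_not]
      have edge : ∀ u v : ZMod (p ^ k), (GUZ (ZMod (p ^ k))).Adj u v →
          (IsUnit u ↔ ¬ IsUnit v) := by
        rintro u v ⟨hne, hu, z, hz0, hz⟩
        constructor
        · rintro h1 h2
          obtain ⟨w, hw⟩ := h1.mul h2
          exact hz0 (by rwa [← hw, Units.mul_right_eq_zero] at hz)
        · intro h2
          by_contra h1
          have hpu := (key u).1 h1
          have hpv := (key v).1 h2
          have : ¬ IsUnit (u + v) := by
            rw [key, ZMod.val_add]
            exact (Nat.dvd_mod_iff (dvd_pow_self p hk.ne')).2 (Nat.dvd_add hpu hpv)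
          exact this hu
      have h1 := edge _ _ hab
      have h2 := edge _ _ hbc
      have h3 := edge _ _ hac
      tauto
    refine ⟨?_, fun hp => hnpp hp.prime.isPrimePow, hnpp⟩
    -- oddness
    by_contra hodd
    have h2 : (2 : ℕ) ∣ n := (Nat.not_odd_iff_even.1 hodd).two_dvd
    let f := ZMod.castHom h2 (ZMod 2)
    have edge : ∀ u v : ZMod n, (GUZ (ZMod n)).Adj u v → f u ≠ f v := by
      rintro u v ⟨hne, hu, -⟩ hfe
      have hfu : IsUnit (f u + f v) := by rw [← map_add]; exact hu.map f
      rw [hfe, ← two_mul] at hfu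
      have h20 : (2 : ZMod 2) = 0 := by decide
      rw [h20, zero_mul] at hfu
      exact (not_isUnit_zero : ¬ IsUnit (0 : ZMod 2)) hfu
    have tri : ∀ x y z : ZMod 2, x ≠ y → y ≠ z → x ≠ z → False := by decide
    exact tri _ _ _ (edge _ _ hab) (edge _ _ hbc) (edge _ _ hac)
  · rintro ⟨hodd, hprime, hpp⟩
    have hoddd : ∀ m : ℕ, m ∣ n → Odd m := by
      intro m hm
      rw [Nat.odd_iff] at hodd ⊢
      rcases Nat.mod_two_eq_zero_or_one m with h | h
      · obtain ⟨c, rfl⟩ := (Nat.dvd_of_mod_eq_zero h).trans hm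
        omega
      · exact h
    set p := n.minFac with hpdef
    have hp : p.Prime := Nat.minFac_prime (by omega)
    have hpd : p ∣ n := Nat.minFac_dvd n
    have hk : 0 < n.factorization p := hp.factorization_pos_of_dvd hn0 hpd
    set m1 := p ^ n.factorization p with hm1def
    set m2 := n / m1 with hm2def
    have hmul : m1 * m2 = n := Nat.ordProj_mul_ordCompl_eq_self n p
    have hcop : Nat.Coprime m1 m2 :=
      Nat.Coprime.pow_left _ (Nat.coprime_ordCompl hp hn0)
    have hm1 : 1 < m1 := hp.one_lt.trans_le (Nat.le_self_pow hk.ne' p)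
    have hm2 : 1 < m2 := by
      have hm2p : 0 < m2 := Nat.ordCompl_pos p hn0
      rcases Nat.lt_or_ge 1 m2 with h | h
      · exact h
      · exfalso
        have hm21 : m2 = 1 := by omega
        rw [hm21, mul_one] at hmul
        exact hpp ⟨p, n.factorization p, hp.prime, hk, hmul⟩
    obtain ⟨A, B, C, hAB, hBC, hAC⟩ :=
      triangle_prod_aux m1 m2 hm1 hm2 (hoddd m1 ⟨m2, hmul.symm⟩)
        (hoddd m2 ⟨m1, by rw [← hmul, mul_comm]⟩)
    have e : ZMod n ≃+* ZMod m1 × ZMod m2 := by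
      rw [← hmul]; exact ZMod.chineseRemainder hcop
    exact ⟨e.symm A, e.symm B, e.symm C, GUZ_map_aux e hAB, GUZ_map_aux e hBC,
      GUZ_map_aux e hAC⟩
end

section
/- G_UZ(Z_n) is a cycle graph if and only if n = 4 or n = 6; specifically G_UZ(Z_4) ≅ C_4 and G_UZ(Z_6) ≅ C_6. -/
open SimpleGraph

instance (n : ℕ) [NeZero n] : DecidableRel (GUZ (ZMod n)).Adj :=
  fun a b => inferInstanceAs (Decidable (a ≠ b ∧ IsUnit (a + b) ∧ ∃ y : ZMod n, y ≠ 0 ∧ a * b * y = 0))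

lemma guz_h4 : ∀ a b : ZMod 4,
    (cycleGraph 4).Adj ((Equiv.refl (Fin 4)) a) ((Equiv.refl (Fin 4)) b) ↔ (GUZ (ZMod 4)).Adj a b := by
  letI : ∀ a b : ZMod 4, Decidable ((cycleGraph 4).Adj ((Equiv.refl (Fin 4)) a) ((Equiv.refl (Fin 4)) b)) :=
    fun a b => (inferInstance : DecidableRel (cycleGraph 4).Adj) _ _
  decide

def guzIso4 : (GUZ (ZMod 4)) ≃g cycleGraph 4 where
  toEquiv := Equiv.refl (Fin 4)
  map_rel_iff' := guz_h4 _ _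

def guzE6 : ZMod 6 ≃ Fin 6 where
  toFun x := ![0,1,4,3,2,5] x
  invFun x := ![0,1,4,3,2,5] x
  left_inv := by decide
  right_inv := by decide

lemma guz_h6 : ∀ a b : ZMod 6,
    (cycleGraph 6).Adj (guzE6 a) (guzE6 b) ↔ (GUZ (ZMod 6)).Adj a b := by decide

def guzIso6 : (GUZ (ZMod 6)) ≃g cycleGraph 6 where
  toEquiv := guzE6
  map_rel_iff' := guz_h6 _ _

lemma guz_cop_aux {k n : ℕ} (hk : k % 2 = 1) (hs : n - 2 * k = 2 ∨ n - 2 * k = 4) :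
    Nat.Coprime k n := by
  have h1 : Nat.gcd k n ∣ k := Nat.gcd_dvd_left k n
  have h2 : Nat.gcd k n ∣ n := Nat.gcd_dvd_right k n
  have h3 : Nat.gcd k n ∣ n - 2 * k := Nat.dvd_sub h2 (h1.mul_left 2)
  have h4 : Nat.gcd k n ∣ 4 := by
    rcases hs with h | h
    · rw [h] at h3; exact h3.trans ⟨2, rfl⟩
    · rwa [h] at h3
  have hd2 : ¬ (2 ∣ Nat.gcd k n) := fun h => by
    have hk2 : 2 ∣ k := h.trans h1
    omega
  obtain ⟨d, hd⟩ : ∃ d, Nat.gcd k n = d := ⟨_, rfl⟩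
  rw [hd] at h4 hd2
  have hle : d ≤ 4 := Nat.le_of_dvd (by norm_num) h4
  show Nat.gcd k n = 1
  rw [hd]
  interval_cases d
  · simp at h4
  · rfl
  · exact absurd (dvd_refl 2) hd2
  · omega
  · exact absurd ⟨2, rfl⟩ hd2

lemma guz_exists_cop {n : ℕ} (h5 : 5 ≤ n) (h6 : n ≠ 6) :
    ∃ k, 2 ≤ k ∧ k ≤ n - 2 ∧ Nat.Coprime k n := by
  rcases Nat.even_or_odd n with he | ho
  · have he' : n % 2 = 0 := Nat.even_iff.mp he
    by_cases h4 : n % 4 = 0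
    · exact ⟨n / 2 - 1, by omega, by omega, guz_cop_aux (by omega) (by omega)⟩
    · exact ⟨n / 2 - 2, by omega, by omega, guz_cop_aux (by omega) (by omega)⟩
  · exact ⟨2, le_refl 2, by omega, Nat.coprime_two_left.mpr ho⟩

lemma guz_three_units {n : ℕ} (h5 : 5 ≤ n) (h6 : n ≠ 6) :
    ∃ a b c : ZMod n, IsUnit a ∧ IsUnit b ∧ IsUnit c ∧ a ≠ b ∧ a ≠ c ∧ b ≠ c := by
  obtain ⟨k, hk2, hkn, hcop⟩ := guz_exists_cop h5 h6
  have hc1 : Nat.Coprime 1 n := Nat.coprime_one_left n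
  have hc3 : Nat.Coprime (n - 1) n := by
    have h1 : Nat.gcd (n - 1) n ∣ n - (n - 1) :=
      Nat.dvd_sub (Nat.gcd_dvd_right _ _) (Nat.gcd_dvd_left _ _)
    rw [show n - (n - 1) = 1 from by omega] at h1
    exact Nat.dvd_one.mp h1
  have v1 : ((1 : ℕ) : ZMod n).val = 1 := ZMod.val_cast_of_lt (by omega)
  have vk : ((k : ℕ) : ZMod n).val = k := ZMod.val_cast_of_lt (by omega)
  have vn : (((n - 1 : ℕ)) : ZMod n).val = n - 1 := ZMod.val_cast_of_lt (by omega)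
  refine ⟨((1 : ℕ) : ZMod n), ((k : ℕ) : ZMod n), (((n - 1 : ℕ)) : ZMod n),
    (ZMod.isUnit_iff_coprime 1 n).mpr hc1, (ZMod.isUnit_iff_coprime k n).mpr hcop,
    (ZMod.isUnit_iff_coprime (n - 1) n).mpr hc3, ?_, ?_, ?_⟩
  · intro h; have := congrArg ZMod.val h; rw [v1, vk] at this; omega
  · intro h; have := congrArg ZMod.val h; rw [v1, vn] at this; omega
  · intro h; have := congrArg ZMod.val h; rw [vk, vn] at this; omega

lemma guz_cyc3 : ∀ w : Fin 3, (cycleGraph 3).Adj w (w + 1) ∧ (cycleGraph 3).Adj w (w - 1) ∧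
    w + 1 ≠ w - 1 := by decide

lemma guz_adj_zero {n : ℕ} (hn : 2 ≤ n) {u : ZMod n} (hu : IsUnit u) :
    (GUZ (ZMod n)).Adj 0 u := by
  haveI : Fact (1 < n) := ⟨hn⟩
  refine ⟨(hu.ne_zero).symm, by rwa [zero_add], 1, one_ne_zero, by simp⟩


/-- `G_UZ(ℤ_n)` is a cycle graph iff `n = 4` or `n = 6`; specifically
`G_UZ(ℤ_4) ≅ C₄` and `G_UZ(ℤ_6) ≅ C₆`. -/
theorem stmt19 :
    (∀ n : ℕ, (∃ m : ℕ, 3 ≤ m ∧ Nonempty ((GUZ (ZMod n)) ≃g cycleGraph m)) ↔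
      (n = 4 ∨ n = 6)) ∧
    Nonempty ((GUZ (ZMod 4)) ≃g cycleGraph 4) ∧
    Nonempty ((GUZ (ZMod 6)) ≃g cycleGraph 6) := by
  refine ⟨fun n => ⟨?_, ?_⟩, ⟨guzIso4⟩, ⟨guzIso6⟩⟩
  · rintro ⟨m, hm, ⟨f⟩⟩
    obtain ⟨k, rfl⟩ : ∃ k, m = k + 2 := ⟨m - 2, by omega⟩
    rcases Nat.eq_zero_or_pos n with rfl | hn
    · haveI := Finite.of_equiv (Fin (k + 2)) f.toEquiv.symm
      exact absurd (not_finite (ZMod 0)) not_false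
    haveI : NeZero n := ⟨hn.ne'⟩
    have hcard : n = k + 2 := by
      have h := Fintype.card_congr f.toEquiv
      simpa [ZMod.card] using h
    by_contra hne
    push_neg at hne
    rcases eq_or_ne n 3 with hn3 | hn3
    · -- n = 3
      obtain rfl : k = 1 := by omega
      subst hn3
      haveI : Fact (Nat.Prime 3) := ⟨by norm_num⟩
      have hvv := guz_cyc3
      have h1 : (GUZ (ZMod 3)).Adj 1 (f.symm (f 1 + 1)) := by
        rw [← f.map_rel_iff, RelIso.apply_symm_apply]
        exact (hvv (f 1)).1
      have h2 : (GUZ (ZMod 3)).Adj 1 (f.symm (f 1 - 1)) := by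
        rw [← f.map_rel_iff, RelIso.apply_symm_apply]
        exact (hvv (f 1)).2.1
      have e1 : f.symm (f 1 + 1) = 0 := by
        obtain ⟨y, hy, hmul⟩ := h1.2.2
        rw [one_mul] at hmul
        rcases mul_eq_zero.mp hmul with h | h
        · exact h
        · exact absurd h hy
      have e2 : f.symm (f 1 - 1) = 0 := by
        obtain ⟨y, hy, hmul⟩ := h2.2.2
        rw [one_mul] at hmul
        rcases mul_eq_zero.mp hmul with h | h
        · exact h
        · exact absurd h hy
      exact (hvv (f 1)).2.2 (f.symm.injective (e1.trans e2.symm))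
    · -- n ≥ 5, n ≠ 6
      have h5 : 5 ≤ n := by omega
      obtain ⟨a, b, c, hua, hub, huc, hab, hac, hbc⟩ := guz_three_units h5 hne.2
      have conv : ∀ x : ZMod n, IsUnit x →
          f x = f 0 - 1 ∨ f x = f 0 + 1 := by
        intro x hx
        have h := f.map_rel_iff.mpr (guz_adj_zero (by omega) hx)
        rw [cycleGraph_adj] at h
        rcases h with h | h
        · left; rw [← h, sub_sub_cancel]
        · right; exact eq_add_of_sub_eq' h
      rcases conv a hua with pa | pa <;> rcases conv b hub with pb | pb <;>
        rcases conv c huc with pc | pc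
      · exact hab (f.injective (pa.trans pb.symm))
      · exact hab (f.injective (pa.trans pb.symm))
      · exact hac (f.injective (pa.trans pc.symm))
      · exact hbc (f.injective (pb.trans pc.symm))
      · exact hbc (f.injective (pb.trans pc.symm))
      · exact hac (f.injective (pa.trans pc.symm))
      · exact hab (f.injective (pa.trans pb.symm))
      · exact hab (f.injective (pa.trans pb.symm))
  · rintro (rfl | rfl)
    · exact ⟨4, by norm_num, ⟨guzIso4⟩⟩
    · exact ⟨6, by norm_num, ⟨guzIso6⟩⟩
end
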